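/- arXiv:1306.2003 — 2 statements merged into one kernel-verified Lean document; each statement's English description precedes it below -/
import Mathlib

section
/- Let m ≥ 1 be an integer, L ≥ m a real number, Σ an m×m Hermitian positive definite complex matrix, and β ∈ (0,1). Set q := β·L + (1−β)·m (equivalently q = L + (1−β)(m−L), so m ≤ q ≤ L) and Σ' := (q/(β·L))·Σ. Then for every m×m Hermitian positive definite complex matrix Z one has the pointwise identity f(Z;Σ,L)^β = [Γ_m(q) · det(Σ)^{(1−β)m} / (Γ_m(L)^β · β^{mq} · L^{(1−β)m²})] · f(Z;Σ',q). (This identity underlies the closed-form Rényi entropy of order β of the scaled complex Wishart law.) -/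
open Matrix ComplexOrder

/-- Real (positive) determinant of a Hermitian positive definite complex matrix. -/
noncomputable def pdet {m : ℕ} (A : Matrix (Fin m) (Fin m) ℂ) : ℝ := A.det.re

/-- Real trace. -/
noncomputable def rtrace {m : ℕ} (A : Matrix (Fin m) (Fin m) ℂ) : ℝ := A.trace.re

/-- Multivariate gamma function Γ_m(L) = π^{m(m−1)/2} ∏_{i=0}^{m−1} Γ(L−i). -/
noncomputable def mGamma (m : ℕ) (L : ℝ) : ℝ :=
  Real.pi ^ (m * (m - 1) / 2) * ∏ i ∈ Finset.range m, Real.Gamma (L - i)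

/-- Scaled complex Wishart density. -/
noncomputable def wdens (m : ℕ) (L : ℝ) (S Z : Matrix (Fin m) (Fin m) ℂ) : ℝ :=
  L ^ ((m : ℝ) * L) * pdet Z ^ (L - (m : ℝ)) * Real.exp (-(L * rtrace (S⁻¹ * Z)))
    / (pdet S ^ L * mGamma m L)

lemma pdet_pos' {m : ℕ} {A : Matrix (Fin m) (Fin m) ℂ} (hA : A.PosDef) : 0 < pdet A := by
  have h := hA.det_pos
  rw [Complex.lt_def] at h
  simpa [pdet] using h.1

lemma pdet_real {m : ℕ} {A : Matrix (Fin m) (Fin m) ℂ} (hA : A.PosDef) :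
    A.det = ((pdet A : ℝ) : ℂ) := by
  have h := hA.det_pos
  rw [Complex.lt_def] at h
  apply Complex.ext <;> simp [pdet, ← h.2]

lemma mGamma_pos' {m : ℕ} {L : ℝ} (h : (m : ℝ) ≤ L) : 0 < mGamma m L := by
  unfold mGamma
  refine mul_pos (pow_pos Real.pi_pos _) (Finset.prod_pos fun i hi => ?_)
  apply Real.Gamma_pos_of_pos
  have : (i : ℝ) < m := by exact_mod_cast Finset.mem_range.mp hi
  linarith

theorem stmt3 (m : ℕ) (hm : 1 ≤ m) (L : ℝ) (hL : (m : ℝ) ≤ L)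
    (S : Matrix (Fin m) (Fin m) ℂ) (hS : S.PosDef)
    (β : ℝ) (hβ : β ∈ Set.Ioo (0 : ℝ) 1)
    (q : ℝ) (hq : q = β * L + (1 - β) * m)
    (S' : Matrix (Fin m) (Fin m) ℂ) (hS' : S' = ((q / (β * L) : ℝ) : ℂ) • S) :
    q = L + (1 - β) * ((m : ℝ) - L) ∧ (m : ℝ) ≤ q ∧ q ≤ L ∧
    ∀ Z : Matrix (Fin m) (Fin m) ℂ, Z.PosDef →
      wdens m L S Z ^ β
        = (mGamma m q * pdet S ^ ((1 - β) * (m : ℝ))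
            / (mGamma m L ^ β * β ^ ((m : ℝ) * q) * L ^ ((1 - β) * (m : ℝ) ^ 2)))
          * wdens m q S' Z := by
  obtain ⟨hβ0, hβ1⟩ := hβ
  have hm1 : (1 : ℝ) ≤ (m : ℝ) := by exact_mod_cast hm
  have hL0 : 0 < L := lt_of_lt_of_le (by linarith) hL
  have hmq : (m : ℝ) ≤ q := by nlinarith
  have hqL : q ≤ L := by nlinarith
  have hq0 : 0 < q := lt_of_lt_of_le (by linarith) hmq
  refine ⟨by rw [hq]; ring, hmq, hqL, ?_⟩
  intro Z hZ
  set c : ℝ := q / (β * L) with hc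
  have hc0 : 0 < c := div_pos hq0 (by positivity)
  have hsd0 : 0 < pdet S := pdet_pos' hS
  have hzd0 : 0 < pdet Z := pdet_pos' hZ
  have hGL0 : 0 < mGamma m L := mGamma_pos' hL
  have hGq0 : 0 < mGamma m q := mGamma_pos' hmq
  have hcC : ((c : ℝ) : ℂ) ≠ 0 := by exact_mod_cast hc0.ne'
  -- determinant of S'
  have hdetS' : pdet S' = c ^ m * pdet S := by
    rw [hS', pdet, det_smul, pdet_real hS, ← Complex.ofReal_pow, ← Complex.ofReal_mul,
      Complex.ofReal_re, Fintype.card_fin]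
  -- trace identity
  have htr : rtrace (S'⁻¹ * Z) = c⁻¹ * rtrace (S⁻¹ * Z) := by
    have hinv : S'⁻¹ = ((c : ℝ) : ℂ)⁻¹ • S⁻¹ := by
      rw [hS']
      apply Matrix.inv_eq_left_inv
      rw [Matrix.smul_mul, Matrix.mul_smul, smul_smul, inv_mul_cancel₀ hcC, one_smul,
        Matrix.nonsing_inv_mul _ ((Matrix.isUnit_iff_isUnit_det S).mp hS.isUnit)]
    rw [hinv, Matrix.smul_mul, rtrace, Matrix.trace_smul, smul_eq_mul, ← Complex.ofReal_inv,
      Complex.re_ofReal_mul, rtrace]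
  have hq' : q * (c⁻¹ * rtrace (S⁻¹ * Z)) = β * L * rtrace (S⁻¹ * Z) := by
    rw [hc]
    field_simp
  have hLp := Real.rpow_pos_of_pos hL0 ((m : ℝ) * L)
  have hzp := Real.rpow_pos_of_pos hzd0 (L - (m : ℝ))
  have hsp := Real.rpow_pos_of_pos hsd0 L
  have hqp := Real.rpow_pos_of_pos hq0 ((m : ℝ) * q)
  have hzq := Real.rpow_pos_of_pos hzd0 (q - (m : ℝ))
  have hcm : (0 : ℝ) < c ^ m * pdet S := by positivity
  have hcmq := Real.rpow_pos_of_pos hcm q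
  have hw1 : 0 < wdens m L S Z := by
    rw [wdens]
    exact div_pos (mul_pos (mul_pos hLp hzp) (Real.exp_pos _)) (mul_pos hsp hGL0)
  have hw2 : 0 < wdens m q S' Z := by
    rw [wdens, hdetS']
    exact div_pos (mul_pos (mul_pos hqp hzq) (Real.exp_pos _)) (mul_pos hcmq hGq0)
  have hK0 : 0 < mGamma m q * pdet S ^ ((1 - β) * (m : ℝ))
      / (mGamma m L ^ β * β ^ ((m : ℝ) * q) * L ^ ((1 - β) * (m : ℝ) ^ 2)) :=
    div_pos (mul_pos hGq0 (Real.rpow_pos_of_pos hsd0 _))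
      (mul_pos (mul_pos (Real.rpow_pos_of_pos hGL0 _) (Real.rpow_pos_of_pos hβ0 _))
        (Real.rpow_pos_of_pos hL0 _))
  have hlc : Real.log c = Real.log q - (Real.log β + Real.log L) := by
    rw [hc, Real.log_div hq0.ne' (mul_pos hβ0 hL0).ne', Real.log_mul hβ0.ne' hL0.ne']
  have lw1 : Real.log (wdens m L S Z)
      = (m : ℝ) * L * Real.log L + (L - (m : ℝ)) * Real.log (pdet Z)
          + (-(L * rtrace (S⁻¹ * Z)))
        - (L * Real.log (pdet S) + Real.log (mGamma m L)) := by
    rw [wdens,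
      Real.log_div (mul_pos (mul_pos hLp hzp) (Real.exp_pos _)).ne' (mul_pos hsp hGL0).ne',
      Real.log_mul (mul_pos hLp hzp).ne' (Real.exp_ne_zero _),
      Real.log_mul hLp.ne' hzp.ne', Real.log_mul hsp.ne' hGL0.ne',
      Real.log_rpow hL0, Real.log_rpow hzd0, Real.log_rpow hsd0, Real.log_exp]
  have lw2 : Real.log (wdens m q S' Z)
      = (m : ℝ) * q * Real.log q + (q - (m : ℝ)) * Real.log (pdet Z)
          + (-(β * L * rtrace (S⁻¹ * Z)))
        - (q * ((m : ℝ) * Real.log c + Real.log (pdet S)) + Real.log (mGamma m q)) := by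
    rw [wdens, hdetS', htr, hq',
      Real.log_div (mul_pos (mul_pos hqp hzq) (Real.exp_pos _)).ne' (mul_pos hcmq hGq0).ne',
      Real.log_mul (mul_pos hqp hzq).ne' (Real.exp_ne_zero _),
      Real.log_mul hqp.ne' hzq.ne', Real.log_mul hcmq.ne' hGq0.ne',
      Real.log_rpow hq0, Real.log_rpow hzd0, Real.log_rpow hcm, Real.log_exp,
      Real.log_mul (pow_ne_zero m hc0.ne') hsd0.ne', Real.log_pow]
  have lK : Real.log (mGamma m q * pdet S ^ ((1 - β) * (m : ℝ))
        / (mGamma m L ^ β * β ^ ((m : ℝ) * q) * L ^ ((1 - β) * (m : ℝ) ^ 2)))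
      = Real.log (mGamma m q) + (1 - β) * (m : ℝ) * Real.log (pdet S)
        - (β * Real.log (mGamma m L) + (m : ℝ) * q * Real.log β
            + (1 - β) * (m : ℝ) ^ 2 * Real.log L) := by
    rw [Real.log_div (mul_pos hGq0 (Real.rpow_pos_of_pos hsd0 _)).ne'
        (mul_pos (mul_pos (Real.rpow_pos_of_pos hGL0 _) (Real.rpow_pos_of_pos hβ0 _))
          (Real.rpow_pos_of_pos hL0 _)).ne',
      Real.log_mul hGq0.ne' (Real.rpow_pos_of_pos hsd0 _).ne',
      Real.log_mul (mul_pos (Real.rpow_pos_of_pos hGL0 _) (Real.rpow_pos_of_pos hβ0 _)).ne'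
        (Real.rpow_pos_of_pos hL0 _).ne',
      Real.log_mul (Real.rpow_pos_of_pos hGL0 _).ne' (Real.rpow_pos_of_pos hβ0 _).ne',
      Real.log_rpow hsd0, Real.log_rpow hGL0, Real.log_rpow hβ0, Real.log_rpow hL0]
  apply Real.log_injOn_pos (Set.mem_Ioi.mpr (Real.rpow_pos_of_pos hw1 β))
    (Set.mem_Ioi.mpr (mul_pos hK0 hw2))
  rw [Real.log_rpow hw1, Real.log_mul hK0.ne' hw2.ne', lw1, lw2, lK, hlc, hq]
  ring
end

section
/- Let L > 0 and σ₁², σ₂² > 0 be real numbers, and let f₁(z) = f(z;σ₁²,L) and f₂(z) = f(z;σ₂²,L) be the corresponding gamma densities. Then both the difference of Shannon entropies and, for every β ∈ (0,1), the difference of Rényi entropies of order β between the two laws equal log(σ₁²/σ₂²): that is, (−∫₀^∞ f₁ log f₁) − (−∫₀^∞ f₂ log f₂) = log(σ₁²/σ₂²), and (1−β)⁻¹ log∫₀^∞ f₁^β − (1−β)⁻¹ log∫₀^∞ f₂^β = log(σ₁²/σ₂²). In particular, the entropy difference used by the entropy-based edge detectors does not depend on the entropy (Shannon or Rényi-β)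 chosen, for fixed equal number of looks L. -/
open MeasureTheory Set

lemma intOn {s r : ℝ} (hs : -1 < s) (hr : 0 < r) :
    IntegrableOn (fun z : ℝ => z ^ s * Real.exp (-(r * z))) (Set.Ioi 0) := by
  have h := integrableOn_rpow_mul_exp_neg_mul_rpow (p := 1) hs one_pos hr
  simpa [Real.rpow_one, neg_mul] using h

lemma abs_log_le {z ε : ℝ} (hz : 0 < z) (hε : 0 < ε) :
    |Real.log z| ≤ z ^ (-ε) / ε + z := by
  have h1 : Real.log z ≤ z := (Real.log_le_sub_one_of_pos hz).trans (by linarith)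
  have h2 : -Real.log z ≤ z ^ (-ε) / ε := by
    rw [← Real.log_inv]
    calc Real.log z⁻¹ ≤ (z⁻¹) ^ ε / ε := Real.log_le_rpow_div (by positivity) hε
    _ = z ^ (-ε) / ε := by rw [← Real.rpow_neg_one z, ← Real.rpow_mul hz.le]; ring_nf
  have h3 : (0:ℝ) ≤ z ^ (-ε) / ε := by positivity
  rcases abs_cases (Real.log z) with ⟨h, _⟩ | ⟨h, _⟩ <;> linarith

lemma intOnLog {s r : ℝ} (hs : -1 < s) (hr : 0 < r) :
    IntegrableOn (fun z : ℝ => z ^ s * Real.exp (-(r * z)) * Real.log z) (Set.Ioi 0) := by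
  set ε := (s + 1) / 2 with hεdef
  have hε : 0 < ε := by simp only [hεdef]; linarith
  have h1 : IntegrableOn
      (fun z : ℝ => ε⁻¹ * (z ^ (s - ε) * Real.exp (-(r * z))) + z ^ (s + 1) * Real.exp (-(r * z)))
      (Set.Ioi 0) :=
    ((intOn (by simp only [hεdef]; linarith) hr).const_mul _).add (intOn (by linarith) hr)
  refine Integrable.mono' h1 ?_ ?_
  · have hm : Measurable fun z : ℝ =>
        Real.exp (Real.log z * s) * Real.exp (-(r * z)) * Real.log z :=
      ((Real.measurable_exp.comp (Real.measurable_log.mul measurable_const)).mul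
        (Real.measurable_exp.comp (measurable_id.const_mul r).neg)).mul Real.measurable_log
    refine hm.aestronglyMeasurable.congr ?_
    filter_upwards [ae_restrict_mem measurableSet_Ioi] with z hz
    rw [← Real.rpow_def_of_pos hz]
  · filter_upwards [ae_restrict_mem measurableSet_Ioi] with z hz
    have hz0 : (0:ℝ) < z := hz
    have hb := abs_log_le hz0 hε
    have hnn : (0:ℝ) ≤ z ^ s * Real.exp (-(r * z)) := by positivity
    calc ‖z ^ s * Real.exp (-(r * z)) * Real.log z‖
        = z ^ s * Real.exp (-(r * z)) * |Real.log z| := by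
          rw [Real.norm_eq_abs, abs_mul, abs_of_nonneg hnn]
      _ ≤ z ^ s * Real.exp (-(r * z)) * (z ^ (-ε) / ε + z) := by
          exact mul_le_mul_of_nonneg_left hb hnn
      _ = ε⁻¹ * (z ^ (s - ε) * Real.exp (-(r * z))) + z ^ (s + 1) * Real.exp (-(r * z)) := by
          rw [show s - ε = s + (-ε) by ring, Real.rpow_add hz0,
            show s + 1 = s + 1 by rfl, Real.rpow_add hz0, Real.rpow_one]
          ring

/-- Single-channel (m = 1) scaled Wishart density: the gamma density with shape `L`
and rate `L/σ²`, i.e. `f(z;σ²,L) = L^L z^{L−1} exp(−Lz/σ²) / (σ^{2L} Γ(L))`. -/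
noncomputable def gdens (L s2 : ℝ) (z : ℝ) : ℝ :=
  L ^ L * z ^ (L - 1) * Real.exp (-(L * z / s2)) / (s2 ^ L * Real.Gamma L)

lemma gdens_eq (L s : ℝ) (hs : 0 < s) :
    gdens L s = fun z => (L ^ L / (s ^ L * Real.Gamma L)) *
      (z ^ (L - 1) * Real.exp (-(L / s * z))) := by
  funext z
  unfold gdens
  rw [show -(L * z / s) = -(L / s * z) by ring]
  ring

lemma gdens_pos {L s z : ℝ} (hL : 0 < L) (hs : 0 < s) (hz : 0 < z) :
    0 < gdens L s z := by
  unfold gdens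
  have := Real.Gamma_pos_of_pos hL
  positivity

lemma K_pos {L s : ℝ} (hL : 0 < L) (hs : 0 < s) :
    0 < L ^ L / (s ^ L * Real.Gamma L) := by
  have := Real.Gamma_pos_of_pos hL
  positivity

lemma int_gdens {L s : ℝ} (hL : 0 < L) (hs : 0 < s) :
    IntegrableOn (gdens L s) (Set.Ioi 0) := by
  rw [gdens_eq L s hs]
  exact (intOn (by linarith) (by positivity)).const_mul _

lemma integral_gdens {L s : ℝ} (hL : 0 < L) (hs : 0 < s) :
    ∫ z in Set.Ioi (0:ℝ), gdens L s z = 1 := by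
  rw [gdens_eq L s hs]
  rw [integral_const_mul]
  rw [Real.integral_rpow_mul_exp_neg_mul_Ioi hL (by positivity)]
  have h1 : (1 / (L / s)) ^ L = s ^ L / L ^ L := by
    rw [one_div, inv_div, Real.div_rpow hs.le hL.le]
  rw [h1]
  have hG := Real.Gamma_pos_of_pos hL
  have hLL : (0:ℝ) < L ^ L := Real.rpow_pos_of_pos hL L
  have hsL : (0:ℝ) < s ^ L := Real.rpow_pos_of_pos hs L
  field_simp

lemma log_gdens {L s z : ℝ} (hL : 0 < L) (hs : 0 < s) (hz : 0 < z) :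
    Real.log (gdens L s z) = Real.log (L ^ L / (s ^ L * Real.Gamma L))
      + (L - 1) * Real.log z - L / s * z := by
  have hK := K_pos hL hs
  have hzp : (0:ℝ) < z ^ (L - 1) := Real.rpow_pos_of_pos hz _
  rw [gdens_eq L s hs]
  simp only
  rw [Real.log_mul hK.ne' (by positivity), Real.log_mul hzp.ne' (Real.exp_ne_zero _),
    Real.log_rpow hz, Real.log_exp]
  ring

lemma int_gdens_log {L s : ℝ} (hL : 0 < L) (hs : 0 < s) :
    IntegrableOn (fun z => gdens L s z * Real.log (gdens L s z)) (Set.Ioi 0) := by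
  set K := L ^ L / (s ^ L * Real.Gamma L) with hK
  set r := L / s with hr
  have hr0 : 0 < r := by positivity
  have hG : IntegrableOn (fun z : ℝ =>
      (K * Real.log K) * (z ^ (L - 1) * Real.exp (-(r * z)))
      + (K * (L - 1)) * (z ^ (L - 1) * Real.exp (-(r * z)) * Real.log z)
      - (K * r) * (z ^ L * Real.exp (-(r * z)))) (Set.Ioi 0) := by
    exact (((intOn (by linarith) hr0).const_mul _).add
      ((intOnLog (by linarith) hr0).const_mul _)).sub
      ((intOn (by linarith) hr0).const_mul _)
  refine hG.congr_fun (fun z hz => ?_) measurableSet_Ioi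
  have hz0 : (0:ℝ) < z := hz
  have hzL : z ^ L = z ^ (L - 1) * z := by
    rw [← Real.rpow_add_one hz0.ne' (L - 1), sub_add_cancel]
  have hgz : gdens L s z = K * (z ^ (L - 1) * Real.exp (-(r * z))) := by
    rw [gdens_eq L s hs]
  beta_reduce
  rw [hgz, ← hgz, log_gdens hL hs hz0, ← hK, ← hr, hzL, hgz]
  ring

lemma gdens_scale {L s1 s2 z : ℝ} (hL : 0 < L) (h1 : 0 < s1) (h2 : 0 < s2) (hz : 0 < z) :
    gdens L s1 (s1 / s2 * z) = (s1 / s2)⁻¹ * gdens L s2 z := by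
  have hc : 0 < s1 / s2 := by positivity
  unfold gdens
  rw [Real.mul_rpow hc.le hz.le]
  have hs1 : s1 ^ L = (s1 / s2) ^ L * s2 ^ L := by
    rw [← Real.mul_rpow hc.le h2.le, div_mul_cancel₀ _ h2.ne']
  have harg : L * (s1 / s2 * z) / s1 = L * z / s2 := by
    field_simp
  have hpow : (s1 / s2) ^ (L - 1) = (s1 / s2) ^ L / (s1 / s2) := by
    rw [Real.rpow_sub hc, Real.rpow_one]
  rw [hs1, harg, hpow]
  have hcL : (0:ℝ) < (s1 / s2) ^ L := Real.rpow_pos_of_pos hc L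
  have hG := Real.Gamma_pos_of_pos hL
  have hs2L : (0:ℝ) < s2 ^ L := Real.rpow_pos_of_pos h2 L
  field_simp

lemma int_gdens_rpow {L s β : ℝ} (hL : 0 < L) (hs : 0 < s) (hβ : β ∈ Set.Ioo (0:ℝ) 1) :
    IntegrableOn (fun z => gdens L s z ^ β) (Set.Ioi 0) := by
  obtain ⟨hβ0, hβ1⟩ := hβ
  set K := L ^ L / (s ^ L * Real.Gamma L) with hK
  set r := L / s with hr
  have hr0 : 0 < r := by positivity
  have hK0 := K_pos hL hs
  have hexp : -1 < (L - 1) * β := by nlinarith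
  have hG : IntegrableOn (fun z : ℝ =>
      K ^ β * (z ^ ((L - 1) * β) * Real.exp (-(r * β * z)))) (Set.Ioi 0) :=
    (intOn hexp (by positivity)).const_mul _
  refine hG.congr_fun (fun z hz => ?_) measurableSet_Ioi
  have hz0 : (0:ℝ) < z := hz
  have hgz : gdens L s z = K * (z ^ (L - 1) * Real.exp (-(r * z))) := by
    rw [gdens_eq L s hs]
  rw [hgz, Real.mul_rpow hK0.le (by positivity),
    Real.mul_rpow (by positivity) (Real.exp_pos _).le,
    ← Real.rpow_mul hz0.le, ← Real.exp_mul, ← hK]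
  ring_nf

lemma integral_gdens_rpow_pos {L s β : ℝ} (hL : 0 < L) (hs : 0 < s)
    (hβ : β ∈ Set.Ioo (0:ℝ) 1) :
    0 < ∫ z in Set.Ioi (0:ℝ), gdens L s z ^ β := by
  rw [setIntegral_pos_iff_support_of_nonneg_ae]
  · refine lt_of_lt_of_le ?_ (measure_mono (?_ : Set.Ioi (0:ℝ) ⊆ _))
    · rw [Real.volume_Ioi]; exact ENNReal.zero_lt_top.trans_le le_rfl
    · intro z hz
      exact ⟨ne_of_gt (Real.rpow_pos_of_pos (gdens_pos hL hs hz) β), hz⟩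
  · filter_upwards [ae_restrict_mem measurableSet_Ioi] with z hz
    exact (Real.rpow_pos_of_pos (gdens_pos hL hs hz) β).le
  · exact int_gdens_rpow hL hs hβ

theorem stmt15 (L s1 s2 : ℝ) (hL : 0 < L) (h1 : 0 < s1) (h2 : 0 < s2) :
    ((-∫ z in Set.Ioi (0 : ℝ), gdens L s1 z * Real.log (gdens L s1 z))
      - (-∫ z in Set.Ioi (0 : ℝ), gdens L s2 z * Real.log (gdens L s2 z)))
      = Real.log (s1 / s2) ∧
    ∀ β ∈ Set.Ioo (0 : ℝ) 1,
      (1 - β)⁻¹ * Real.log (∫ z in Set.Ioi (0 : ℝ), gdens L s1 z ^ β)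
        - (1 - β)⁻¹ * Real.log (∫ z in Set.Ioi (0 : ℝ), gdens L s2 z ^ β)
        = Real.log (s1 / s2) := by
  have hc : 0 < s1 / s2 := div_pos h1 h2
  constructor
  · have h := MeasureTheory.integral_comp_mul_left_Ioi
      (fun z => gdens L s1 z * Real.log (gdens L s1 z)) 0 hc
    rw [mul_zero] at h
    have heq : ∫ x in Set.Ioi (0:ℝ), gdens L s1 (s1 / s2 * x) * Real.log (gdens L s1 (s1 / s2 * x))
        = ∫ x in Set.Ioi (0:ℝ), (s1 / s2)⁻¹ * (gdens L s2 x * Real.log (gdens L s2 x)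
            - Real.log (s1 / s2) * gdens L s2 x) := by
      refine setIntegral_congr_fun measurableSet_Ioi (fun x hx => ?_)
      rw [gdens_scale hL h1 h2 hx,
        Real.log_mul (inv_ne_zero hc.ne') (gdens_pos hL h2 hx).ne', Real.log_inv]
      ring
    rw [heq, integral_const_mul,
      integral_sub (int_gdens_log hL h2) ((int_gdens hL h2).const_mul _),
      integral_const_mul, integral_gdens hL h2, smul_eq_mul] at h
    have h' := mul_left_cancel₀ (inv_ne_zero hc.ne') h
    rw [mul_one] at h'
    linarith
  · intro β hβ
    obtain ⟨hβ0, hβ1⟩ := hβ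
    have h1β : (1:ℝ) - β ≠ 0 := by linarith
    have h := MeasureTheory.integral_comp_mul_left_Ioi (fun z => gdens L s1 z ^ β) 0 hc
    rw [mul_zero] at h
    have heq : ∫ x in Set.Ioi (0:ℝ), gdens L s1 (s1 / s2 * x) ^ β
        = ∫ x in Set.Ioi (0:ℝ), ((s1 / s2)⁻¹) ^ β * gdens L s2 x ^ β := by
      refine setIntegral_congr_fun measurableSet_Ioi (fun x hx => ?_)
      rw [gdens_scale hL h1 h2 hx, Real.mul_rpow (by positivity) (gdens_pos hL h2 hx).le]
    rw [heq, integral_const_mul, smul_eq_mul] at h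
    have hJ2 := integral_gdens_rpow_pos hL h2 ⟨hβ0, hβ1⟩
    have hpow : (s1 / s2) * ((s1 / s2)⁻¹) ^ β = (s1 / s2) ^ (1 - β) := by
      rw [Real.inv_rpow hc.le, ← Real.rpow_neg hc.le, sub_eq_add_neg,
        Real.rpow_add hc, Real.rpow_one]
    have hJ1 : (∫ z in Set.Ioi (0:ℝ), gdens L s1 z ^ β)
        = (s1 / s2) ^ (1 - β) * ∫ z in Set.Ioi (0:ℝ), gdens L s2 z ^ β := by
      calc (∫ z in Set.Ioi (0:ℝ), gdens L s1 z ^ β)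
          = (s1 / s2) * (s1 / s2)⁻¹ * ∫ z in Set.Ioi (0:ℝ), gdens L s1 z ^ β := by
            rw [mul_inv_cancel₀ hc.ne', one_mul]
        _ = (s1 / s2) * (((s1 / s2)⁻¹) ^ β * ∫ z in Set.Ioi (0:ℝ), gdens L s2 z ^ β) := by
            rw [mul_assoc, ← h]
        _ = (s1 / s2) ^ (1 - β) * ∫ z in Set.Ioi (0:ℝ), gdens L s2 z ^ β := by
            rw [← mul_assoc, hpow]
    rw [hJ1, Real.log_mul (Real.rpow_pos_of_pos hc _).ne' hJ2.ne', Real.log_rpow hc]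
    field_simp
    ring
end
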